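/- Let m ≥ 2 be divisible by 6 and let (R_n)_{n≥0} be a cyclic urn process with m types started with one ball of type 0. Then for every n ≥ 0, E[|u_{m/6}(R_n)|²] = (n+1)·Σ_{t=1}^{n+1} (1/t). -/

import Mathlib

open MeasureTheory ProbabilityTheory Filter Complex Finset Topology

noncomputable section

/-- `ω = exp(2πi/m)`, the `m`-th elementary root of unity. -/
def cw (m : ℕ) : ℂ := Complex.exp (2 * Real.pi * Complex.I / m)

/-- `λ_k = cos(2πk/m)`. -/
def lam (m k : ℕ) : ℝ := Real.cos (2 * Real.pi * k / m)

/-- `μ_k = sin(2πk/m)`. -/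
def muim (m k : ℕ) : ℝ := Real.sin (2 * Real.pi * k / m)

/-- the eigenvector `v_k = (1/m)(1, ω^{-k}, …, ω^{-(m-1)k})`. -/
def vvec (m k : ℕ) : Fin m → ℂ :=
  fun t => (m : ℂ)⁻¹ * cw m ^ (-((k * (t : ℕ) : ℕ) : ℤ))

/-- the dual coefficient `u_k(w) = ∑_t ω^{kt} w_t`. -/
def ucoef (m k : ℕ) (w : Fin m → ℝ) : ℂ :=
  ∑ t : Fin m, cw m ^ (k * (t : ℕ)) * (w t : ℂ)

/-- the replacement matrix `A` of the cyclic urn. -/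
def repA (m : ℕ) : Matrix (Fin m) (Fin m) ℝ :=
  Matrix.of fun i j => if (j : ℕ) = ((i : ℕ) + 1) % m then 1 else 0

/-- the filtration `𝓕_n = σ(R_0, …, R_n)`. -/
def urnFilt {Ω : Type*} [MeasurableSpace Ω] (m : ℕ) (R : ℕ → Ω → Fin m → ℝ) (n : ℕ) :
    MeasurableSpace Ω :=
  ⨆ i ∈ Finset.range (n + 1), MeasurableSpace.comap (R i) inferInstance

/-- A cyclic urn process with `m` types started with one ball of type `j0`. -/
structure IsCyclicUrn {Ω : Type*} [MeasurableSpace Ω] (μ : Measure Ω) (m : ℕ) (j0 : Fin m)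
    (R : ℕ → Ω → Fin m → ℝ) : Prop where
  isProb : IsProbabilityMeasure μ
  meas : ∀ n, Measurable (R n)
  natVal : ∀ n ω i, ∃ z : ℕ, R n ω i = z
  init : ∀ ω, R 0 ω = fun i => if i = j0 then 1 else 0
  step : ∀ n, ∀ j : Fin m,
    μ[Set.indicator {ω | R (n + 1) ω =
        fun i => R n ω i + if (i : ℕ) = ((j : ℕ) + 1) % m then 1 else 0}
      (fun _ => (1 : ℝ)) | urnFilt m R n]
      =ᵐ[μ] fun ω => R n ω j / (n + 1)

/-- componentwise expectation `E[X]` of a random vector. -/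
def expVec {Ω : Type*} [MeasurableSpace Ω] (μ : Measure Ω) {m : ℕ}
    (X : Ω → Fin m → ℝ) : Fin m → ℝ := fun i => ∫ ω, X ω i ∂μ

/-- the martingale `M_{k,n} = (Γ(n+1)/Γ(n+1+ω^k)) u_k(R_n - E[R_n])`, with `M_{k,0} = 0`. -/
def Mart {Ω : Type*} [MeasurableSpace Ω] (μ : Measure Ω) (m k : ℕ)
    (R : ℕ → Ω → Fin m → ℝ) (n : ℕ) (ω : Ω) : ℂ :=
  if n = 0 then 0
  else (Complex.Gamma ((n : ℂ) + 1) / Complex.Gamma ((n : ℂ) + 1 + cw m ^ k)) *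
    ucoef m k (fun t => R n ω t - expVec μ (R n) t)

/-- `ν` is the centered Gaussian distribution `𝒩(0, S)` on `ℝ^d` (Cramér–Wold
characterization: every linear functional is one-dimensional centered Gaussian). -/
def IsCenteredGaussian {d : ℕ} (ν : Measure (Fin d → ℝ)) (S : Matrix (Fin d) (Fin d) ℝ) : Prop :=
  IsProbabilityMeasure ν ∧
  ∀ l : Fin d → ℝ,
    ν.map (fun x => ∑ i, l i * x i) =
      gaussianReal 0 (Real.toNNReal (∑ i, ∑ j, l i * S i j * l j))

/-- convergence in distribution of the random vectors `X_n` to the law `ν`. -/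
def TendstoInDist {Ω : Type*} [MeasurableSpace Ω] (μ : Measure Ω) {d : ℕ}
    (X : ℕ → Ω → Fin d → ℝ) (ν : Measure (Fin d → ℝ)) : Prop :=
  ∀ f : BoundedContinuousFunction (Fin d → ℝ) ℝ,
    Tendsto (fun n => ∫ ω, f (X n ω) ∂μ) atTop (𝓝 (∫ x, f x ∂ν))


lemma cw_pow_m (m : ℕ) (hm : m ≠ 0) : cw m ^ m = 1 := by
  rw [cw, ← Complex.exp_nat_mul]
  have : (m : ℂ) ≠ 0 := Nat.cast_ne_zero.mpr hm
  have h2 : (m : ℂ) * (2 * Real.pi * Complex.I / m) = 2 * Real.pi * Complex.I := by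
    field_simp
  rw [h2]
  simpa [mul_comm, mul_assoc] using Complex.exp_two_pi_mul_I

lemma alpha_eq (m : ℕ) (hm : 2 ≤ m) (hme : 6 ∣ m) :
    cw m ^ (m / 6) = Complex.exp (((Real.pi / 3 : ℝ) : ℂ) * Complex.I) := by
  obtain ⟨q, rfl⟩ := hme
  have hq : q ≠ 0 := by rintro rfl; omega
  have hq6 : (6 * q) / 6 = q := by omega
  rw [hq6, cw, ← Complex.exp_nat_mul]
  congr 1
  have hqC : (q : ℂ) ≠ 0 := Nat.cast_ne_zero.mpr hq
  push_cast
  field_simp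
  ring

lemma alpha_re (m : ℕ) (hm : 2 ≤ m) (hme : 6 ∣ m) : (cw m ^ (m / 6)).re = 1 / 2 := by
  rw [alpha_eq m hm hme, Complex.exp_ofReal_mul_I_re, Real.cos_pi_div_three]

lemma alpha_normSq_pow (m : ℕ) (hm : 2 ≤ m) (hme : 6 ∣ m) (s : ℕ) :
    Complex.normSq ((cw m ^ (m / 6)) ^ s) = 1 := by
  have h1 : ‖cw m ^ (m / 6)‖ = 1 := by
    rw [alpha_eq m hm hme, Complex.norm_exp_ofReal_mul_I]
  have : ‖(cw m ^ (m / 6)) ^ s‖ = 1 := by rw [norm_pow, h1, one_pow]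
  rw [← Complex.sq_norm, this, one_pow]

lemma ucoef_eq (m k : ℕ) (w : Fin m → ℝ) :
    ucoef m k w = ∑ t : Fin m, (cw m ^ k) ^ (t : ℕ) * (w t : ℂ) := by
  simp [ucoef, pow_mul]

lemma ucoef_add_e (m k : ℕ) (hm : m ≠ 0) (w : Fin m → ℝ) (j : Fin m) :
    ucoef m k (fun i => w i + if (i : ℕ) = ((j : ℕ) + 1) % m then 1 else 0) =
      ucoef m k w + (cw m ^ k) ^ ((j : ℕ) + 1) := by
  have hlt : ((j : ℕ) + 1) % m < m := Nat.mod_lt _ (Nat.pos_of_ne_zero hm)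
  have key : ∀ t : Fin m, ((t : ℕ) = ((j : ℕ) + 1) % m) ↔ t = ⟨_, hlt⟩ := by
    intro t; constructor
    · intro h; exact Fin.ext h
    · intro h; rw [h]
  simp only [ucoef]
  have : ∀ t : Fin m,
      cw m ^ (k * (t : ℕ)) * ((w t + if (t : ℕ) = ((j : ℕ) + 1) % m then 1 else 0 : ℝ) : ℂ) =
      cw m ^ (k * (t : ℕ)) * (w t : ℂ) +
        (if t = ⟨_, hlt⟩ then cw m ^ (k * (t : ℕ)) else 0) := by
    intro t
    by_cases h : t = ⟨_, hlt⟩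
    · simp [h, (key t).mpr h]
      ring
    · have : ¬ ((t : ℕ) = ((j : ℕ) + 1) % m) := fun hc => h ((key t).mp hc)
      simp [h, this]
  rw [Finset.sum_congr rfl (fun t _ => this t), Finset.sum_add_distrib,
    Finset.sum_ite_eq' Finset.univ (⟨_, hlt⟩ : Fin m)]
  simp only [Finset.mem_univ, if_true]
  congr 1
  have hcw : (cw m ^ k) ^ ((j : ℕ) + 1) = (cw m ^ k) ^ (((j : ℕ) + 1) % m) := by
    refine pow_eq_pow_mod _ ?_
    rw [← pow_mul, mul_comm, pow_mul, cw_pow_m m hm, one_pow]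
  rw [hcw, ← pow_mul]

section Urn
variable {Ω : Type*} [MeasurableSpace Ω] {μ : Measure Ω} {m : ℕ} {R : ℕ → Ω → Fin m → ℝ}

/-- the event that at step `n` a ball of type `j` was drawn. -/
def ev (R : ℕ → Ω → Fin m → ℝ) (n : ℕ) (j : Fin m) : Set Ω :=
  {ω | R (n + 1) ω = fun i => R n ω i + if (i : ℕ) = ((j : ℕ) + 1) % m then 1 else 0}

lemma urnFilt_le (hMr : ∀ i, Measurable (R i)) (n : ℕ) :
    urnFilt m R n ≤ ‹MeasurableSpace Ω› := by
  refine iSup₂_le fun i _ => (hMr i).comap_le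

lemma measurable_R_filt (n : ℕ) : Measurable[urnFilt m R n] (R n) := by
  refine Measurable.of_comap_le ?_
  exact le_iSup₂ (f := fun i (_ : i ∈ Finset.range (n+1)) => MeasurableSpace.comap (R i) inferInstance) n (Finset.self_mem_range_succ n)

lemma ev_measurableSet (hMr : ∀ i, Measurable (R i)) (n : ℕ) (j : Fin m) :
    MeasurableSet (ev R n j) := by
  apply measurableSet_eq_fun (hMr (n+1))
  exact Measurable.add (hMr n) measurable_const

lemma ev_disjoint (n : ℕ) {j j' : Fin m} (h : j ≠ j') :
    Disjoint (ev R n j) (ev R n j') := by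
  rw [Set.disjoint_left]
  intro ω h1 h2
  have hm0 : 0 < m := j.pos
  have := (h1.symm.trans h2)
  have h3 := congrFun this ⟨((j : ℕ) + 1) % m, Nat.mod_lt _ hm0⟩
  simp only at h3
  have e : ∀ a : Fin m, ((a : ℕ) + 1) % m = if (a : ℕ) + 1 = m then 0 else (a : ℕ) + 1 := by
    intro a
    have ha := a.isLt
    rcases Nat.lt_or_ge ((a : ℕ) + 1) m with h' | h'
    · rw [Nat.mod_eq_of_lt h', if_neg (by omega)]
    · have h'' : (a : ℕ) + 1 = m := by omega
      simp [h'']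
  have hne : ¬ (((j : ℕ) + 1) % m = ((j' : ℕ) + 1) % m) := by
    intro hc
    apply h
    apply Fin.ext
    rw [e j, e j'] at hc
    have hj := j.isLt; have hj' := j'.isLt
    split_ifs at hc <;> omega
  rw [if_neg hne] at h3
  norm_num at h3

variable {j0 : Fin m}

lemma pullout (hR : IsCyclicUrn μ m j0 R) (n : ℕ) (j : Fin m)
    {g : Ω → ℝ} (hg : StronglyMeasurable[urnFilt m R n] g) {C : ℝ}
    (hb : ∀ᵐ ω ∂μ, ‖g ω‖ ≤ C) :
    ∫ ω, g ω * (ev R n j).indicator (fun _ => (1:ℝ)) ω ∂μ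
      = ∫ ω, g ω * (R n ω j / (n + 1)) ∂μ := by
  haveI := hR.isProb
  have hle : urnFilt m R n ≤ ‹MeasurableSpace Ω› := urnFilt_le hR.meas n
  haveI : SigmaFinite (μ.trim hle) := by
    haveI : IsFiniteMeasure (μ.trim hle) := isFiniteMeasure_trim hle
    infer_instance
  set ind : Ω → ℝ := (ev R n j).indicator (fun _ => (1:ℝ)) with hind_def
  have hind : Integrable ind μ :=
    (integrable_const (1:ℝ)).indicator (ev_measurableSet hR.meas n j)
  have hfg : Integrable (g * ind) μ :=
    hind.bdd_mul ((hg.mono hle).aestronglyMeasurable) hb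
  have h1 := condExp_mul_of_stronglyMeasurable_left hg hfg hind
  have h2 := hR.step n j
  have h3 : ∫ ω, (g * ind) ω ∂μ = ∫ ω, (μ[g * ind|urnFilt m R n]) ω ∂μ :=
    (integral_condExp hle).symm
  have h4 : ∫ ω, (μ[g * ind|urnFilt m R n]) ω ∂μ
      = ∫ ω, g ω * (μ[ind|urnFilt m R n]) ω ∂μ := integral_congr_ae h1
  have h5 : ∫ ω, g ω * (μ[ind|urnFilt m R n]) ω ∂μ
      = ∫ ω, g ω * (R n ω j / (n + 1)) ∂μ := by
    refine integral_congr_ae ?_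
    filter_upwards [h2] with ω hω
    have hω' : (μ[ind|urnFilt m R n]) ω = R n ω j / (n+1) := hω
    rw [hω']
  calc ∫ ω, g ω * ind ω ∂μ = ∫ ω, (g * ind) ω ∂μ := by simp only [Pi.mul_apply]
    _ = ∫ ω, g ω * (R n ω j / (n + 1)) ∂μ := by rw [h3, h4, h5]

lemma sum_ind (c : ℕ) (hc : c < m) :
    ∑ i : Fin m, (if (i : ℕ) = c then (1:ℝ) else 0) = 1 := by
  have : ∀ i : Fin m, ((i : ℕ) = c ↔ i = ⟨c, hc⟩) :=
    fun i => ⟨fun h => Fin.ext h, fun h => by rw [h]⟩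
  simp only [this]
  rw [Finset.sum_ite_eq' Finset.univ (⟨c, hc⟩ : Fin m)]
  simp

lemma R_nonneg (hR : IsCyclicUrn μ m j0 R) (n : ℕ) (ω : Ω) (i : Fin m) : 0 ≤ R n ω i := by
  obtain ⟨z, hz⟩ := hR.natVal n ω i
  rw [hz]; exact Nat.cast_nonneg z

lemma ae_exists_ev (hR : IsCyclicUrn μ m j0 R) (n : ℕ)
    (IH : ∀ᵐ ω ∂μ, ∑ i, R n ω i = n + 1) :
    ∀ᵐ ω ∂μ, ∃ j, ω ∈ ev R n j := by
  haveI := hR.isProb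
  classical
  have hm0 : 0 < m := j0.pos
  have hU : ∀ᵐ ω ∂μ, ∃ j, ω ∈ ev R n j := by
    set f : Ω → ℝ := fun ω => ∑ j : Fin m, (ev R n j).indicator (fun _ => (1:ℝ)) ω with hf
    have hf01 : ∀ ω, f ω = if ∃ j, ω ∈ ev R n j then 1 else 0 := by
      intro ω
      by_cases hUω : ∃ j, ω ∈ ev R n j
      · obtain ⟨j₀, hj₀⟩ := hUω
        have hone : ∀ j : Fin m, (ev R n j).indicator (fun _ => (1:ℝ)) ω
            = if j = j₀ then 1 else 0 := by
          intro j
          by_cases hj : j = j₀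
          · subst hj; simp [Set.indicator_of_mem hj₀]
          · have : ω ∉ ev R n j := fun hc =>
              (Set.disjoint_left.mp (ev_disjoint n hj)) hc hj₀
            simp [Set.indicator_of_notMem this, hj]
        rw [if_pos ⟨j₀, hj₀⟩, hf]
        simp only [hone]
        rw [Finset.sum_ite_eq' Finset.univ j₀]
        simp
      · rw [if_neg hUω, hf]
        push_neg at hUω
        simp [Set.indicator_of_notMem (hUω _)]
    have hint : ∀ j : Fin m, ∫ ω, (ev R n j).indicator (fun _ => (1:ℝ)) ω ∂μ
        = ∫ ω, R n ω j / (n + 1) ∂μ := by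
      intro j
      have := pullout hR n j (g := fun _ => (1:ℝ))
        (stronglyMeasurable_const) (C := 1)
        (Filter.Eventually.of_forall fun ω => by norm_num)
      simpa using this
    have hintRj : ∀ j : Fin m, Integrable (fun ω => R n ω j / (n+1)) μ := by
      intro j
      have hble : ∀ᵐ ω ∂μ, ‖R n ω j / (n+1)‖ ≤ 1 := by
        filter_upwards [IH] with ω hω
        have h0 : 0 ≤ R n ω j := R_nonneg hR n ω j
        have hle : R n ω j ≤ (n : ℝ) + 1 := by
          rw [← hω]
          exact Finset.single_le_sum (fun i _ => R_nonneg hR n ω i) (Finset.mem_univ j)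
        rw [Real.norm_eq_abs, abs_div, _root_.abs_of_nonneg h0,
          _root_.abs_of_pos (by positivity : (0:ℝ) < (n:ℝ)+1),
          div_le_one (by positivity)]
        exact hle
      exact (integrable_const (1:ℝ)).mono'
        (((hR.meas n).eval.div_const _).aestronglyMeasurable) hble
    have hIf : ∫ ω, f ω ∂μ = 1 := by
      rw [hf]
      rw [integral_finset_sum _ (fun j _ =>
        (integrable_const (1:ℝ)).indicator (ev_measurableSet hR.meas n j))]
      rw [Finset.sum_congr rfl fun j _ => hint j]
      rw [← integral_finset_sum _ (fun j _ => hintRj j)]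
      rw [integral_congr_ae (g := fun _ => (1:ℝ)) ?_, integral_const]
      · simp
      · filter_upwards [IH] with ω hω
        rw [← Finset.sum_div, hω]
        field_simp
    have hmeasf : Measurable f := by
      rw [hf]
      exact Finset.measurable_sum _ fun j _ =>
        (measurable_const.indicator (ev_measurableSet hR.meas n j))
    have hfle : ∀ ω, f ω ≤ 1 := by
      intro ω; rw [hf01]; split_ifs <;> norm_num
    have hintf : Integrable f μ := (integrable_const (1:ℝ)).mono'
      hmeasf.aestronglyMeasurable (Filter.Eventually.of_forall fun ω => by
        rw [hf01, Real.norm_eq_abs]; split_ifs <;> norm_num)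
    have hzero0 : ∫ ω, (1 - f ω) ∂μ = 0 := by
      rw [integral_sub (integrable_const 1) hintf, hIf, integral_const]
      simp
    have hzero : (fun ω => 1 - f ω) =ᵐ[μ] 0 :=
      (integral_eq_zero_iff_of_nonneg_ae
        (Filter.Eventually.of_forall fun ω => by
          simp only [Pi.zero_apply, Pi.sub_apply]; linarith [hfle ω])
        ((integrable_const 1).sub hintf)).mp hzero0
    filter_upwards [hzero] with ω hω
    simp only [Pi.zero_apply] at hω
    have hfω : f ω = 1 := by linarith
    rw [hf01] at hfω
    by_contra hc
    rw [if_neg hc] at hfω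
    norm_num at hfω
  exact hU

lemma sum_R (hR : IsCyclicUrn μ m j0 R) (n : ℕ) :
    ∀ᵐ ω ∂μ, ∑ i, R n ω i = n + 1 := by
  haveI := hR.isProb
  induction n with
  | zero =>
    refine Filter.Eventually.of_forall fun ω => ?_
    rw [hR.init ω]
    simpa using sum_ind (m := m) (j0 : ℕ) j0.isLt
  | succ n IH =>
    classical
    have hm0 : 0 < m := j0.pos
    have hU := ae_exists_ev hR n IH
    filter_upwards [IH, hU] with ω hω hj
    obtain ⟨j, hj⟩ := hj
    have hRω : R (n+1) ω = fun i => R n ω i + if (i : ℕ) = ((j : ℕ) + 1) % m then 1 else 0 := hj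
    rw [hRω, Finset.sum_add_distrib, hω, sum_ind _ (Nat.mod_lt _ hm0)]
    push_cast
    ring

end Urn

lemma abs_cw_pow' (m s : ℕ) : ‖cw m ^ s‖ = 1 := by
  have h : (2 : ℂ) * Real.pi * Complex.I / m = ((2 * Real.pi / m : ℝ) : ℂ) * Complex.I := by
    push_cast
    ring
  rw [norm_pow, cw, h, Complex.norm_exp_ofReal_mul_I, one_pow]

lemma abs_ucoef_le (m k : ℕ) (w : Fin m → ℝ) (hw : ∀ t, 0 ≤ w t) :
    ‖ucoef m k w‖ ≤ ∑ t, w t := by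
  refine le_trans (norm_sum_le _ _) ?_
  refine le_of_eq (Finset.sum_congr rfl fun t _ => ?_)
  rw [norm_mul]
  have : ‖cw m ^ (k * (t : ℕ))‖ = 1 := abs_cw_pow' m _
  rw [this, one_mul, Complex.norm_real, Real.norm_eq_abs, _root_.abs_of_nonneg (hw t)]

lemma continuous_ucoef (m k : ℕ) : Continuous fun w : Fin m → ℝ => ucoef m k w := by
  unfold ucoef
  refine continuous_finset_sum _ fun t _ => continuous_const.mul ?_
  exact Complex.continuous_ofReal.comp (continuous_apply t)

lemma normSq_cw_pow (m s : ℕ) : Complex.normSq (cw m ^ s) = 1 := by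
  rw [← Complex.sq_norm, abs_cw_pow', one_pow]

lemma step_integral {Ω : Type*} [MeasurableSpace Ω] {μ : Measure Ω} {m : ℕ}
    {R : ℕ → Ω → Fin m → ℝ} {j0 : Fin m} (hR : IsCyclicUrn μ m j0 R)
    (hm : 2 ≤ m) (hme : 6 ∣ m) (n : ℕ) :
    ∫ ω, Complex.normSq (ucoef m (m / 6) (R (n+1) ω)) ∂μ
      = ((n:ℝ)+2)/((n:ℝ)+1) * (∫ ω, Complex.normSq (ucoef m (m / 6) (R n ω)) ∂μ) + 1 := by
  classical
  haveI := hR.isProb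
  have hm0 : m ≠ 0 := by omega
  set k := m / 6 with hk
  set α := cw m ^ k with hα
  set X : Ω → ℂ := fun ω => ucoef m k (R n ω) with hX
  set Y : Ω → ℝ := fun ω => Complex.normSq (X ω) with hY
  set h : Fin m → Ω → ℝ :=
    fun j ω => Y ω + 2 * (X ω * (starRingEnd ℂ) (α ^ ((j:ℕ)+1))).re + 1 with hh
  -- measurability
  have hXmeas : Measurable X := (continuous_ucoef m k).measurable.comp (hR.meas n)
  have hYcont : Continuous fun w : Fin m → ℝ => Complex.normSq (ucoef m k w) :=
    Complex.continuous_normSq.comp (continuous_ucoef m k)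
  have hYmeas : Measurable Y := hYcont.measurable.comp (hR.meas n)
  have hhcont : ∀ j : Fin m, Continuous fun w : Fin m → ℝ =>
      Complex.normSq (ucoef m k w) +
        2 * (ucoef m k w * (starRingEnd ℂ) (α ^ ((j:ℕ)+1))).re + 1 := by
    intro j
    refine Continuous.add (Continuous.add hYcont ?_) continuous_const
    exact continuous_const.mul (Complex.continuous_re.comp
      ((continuous_ucoef m k).mul continuous_const))
  have hhmeasF : ∀ j : Fin m, StronglyMeasurable[urnFilt m R n] (h j) := by
    intro j
    exact ((hhcont j).measurable.comp (measurable_R_filt n)).stronglyMeasurable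
  -- a.e. bounds
  have hXbound : ∀ᵐ ω ∂μ, ‖X ω‖ ≤ (n:ℝ) + 1 := by
    filter_upwards [sum_R hR n] with ω hω
    calc ‖X ω‖ ≤ ∑ t, R n ω t := abs_ucoef_le m k _ (R_nonneg hR n ω)
      _ = (n:ℝ) + 1 := hω
  have hYbound : ∀ᵐ ω ∂μ, ‖Y ω‖ ≤ ((n:ℝ) + 1)^2 := by
    filter_upwards [hXbound] with ω hω
    have hYval : Y ω = ‖X ω‖^2 := (Complex.sq_norm (X ω)).symm
    rw [Real.norm_eq_abs, hYval, _root_.abs_of_nonneg (by positivity)]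
    have h0 : (0:ℝ) ≤ ‖X ω‖ := norm_nonneg _
    nlinarith
  have habsα : ∀ s : ℕ, ‖α ^ s‖ = 1 := by
    intro s; rw [hα, ← pow_mul, abs_cw_pow']
  have hhbound : ∀ j : Fin m, ∀ᵐ ω ∂μ, ‖h j ω‖ ≤ ((n:ℝ)+1)^2 + 2*((n:ℝ)+1) + 1 := by
    intro j
    filter_upwards [hXbound] with ω hω
    have hYval : Y ω = ‖X ω‖^2 := (Complex.sq_norm (X ω)).symm
    have h0 : (0:ℝ) ≤ ‖X ω‖ := norm_nonneg _
    have h1 : |Y ω| ≤ ((n:ℝ)+1)^2 := by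
      rw [hYval, _root_.abs_of_nonneg (by positivity)]
      nlinarith
    have h2 : |(X ω * (starRingEnd ℂ) (α ^ ((j:ℕ)+1))).re| ≤ (n:ℝ) + 1 := by
      refine le_trans (Complex.abs_re_le_norm _) ?_
      rw [norm_mul, Complex.norm_conj, habsα, mul_one]
      exact hω
    have hval : h j ω = Y ω + 2 * (X ω * (starRingEnd ℂ) (α ^ ((j:ℕ)+1))).re + 1 := rfl
    rw [Real.norm_eq_abs, hval]
    calc |Y ω + 2 * (X ω * (starRingEnd ℂ) (α ^ ((j:ℕ)+1))).re + 1|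
        ≤ |Y ω| + |2 * (X ω * (starRingEnd ℂ) (α ^ ((j:ℕ)+1))).re| + |1| :=
          abs_add_three _ _ _
      _ ≤ ((n:ℝ)+1)^2 + 2*((n:ℝ)+1) + 1 := by
          rw [abs_mul, abs_one, (by norm_num : |(2:ℝ)| = 2)]
          nlinarith [abs_nonneg ((X ω * (starRingEnd ℂ) (α ^ ((j:ℕ)+1))).re)]
  -- a.e. pointwise decomposition at time n+1
  have hAE : ∀ᵐ ω ∂μ, Complex.normSq (ucoef m k (R (n+1) ω))
      = ∑ j : Fin m, h j ω * (ev R n j).indicator (fun _ => (1:ℝ)) ω := by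
    filter_upwards [ae_exists_ev hR n (sum_R hR n)] with ω hω
    obtain ⟨j₀, hj₀⟩ := hω
    have hsum : ∀ j : Fin m, h j ω * (ev R n j).indicator (fun _ => (1:ℝ)) ω
        = if j = j₀ then h j₀ ω else 0 := by
      intro j
      by_cases hj : j = j₀
      · subst hj; simp [Set.indicator_of_mem hj₀]
      · have hnot : ω ∉ ev R n j := fun hc =>
          (Set.disjoint_left.mp (ev_disjoint n hj)) hc hj₀
        simp [Set.indicator_of_notMem hnot, hj]
    rw [Finset.sum_congr rfl fun j _ => hsum j, Finset.sum_ite_eq' Finset.univ j₀]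
    simp only [Finset.mem_univ, if_true]
    have hRe : R (n+1) ω = fun i => R n ω i + if (i:ℕ) = ((j₀:ℕ)+1) % m then 1 else 0 := hj₀
    rw [hRe, ucoef_add_e m k hm0 _ j₀]
    have e1 : ucoef m k (R n ω) = X ω := rfl
    have e2 : ((cw m ^ k) ^ ((j₀:ℕ)+1) : ℂ) = α ^ ((j₀:ℕ)+1) := rfl
    rw [e1, e2, Complex.normSq_add]
    have e3 : Complex.normSq (α ^ ((j₀:ℕ)+1)) = 1 := by
      rw [hα, ← pow_mul, normSq_cw_pow]
    rw [e3]
    have e4 : h j₀ ω = Y ω + 2 * (X ω * (starRingEnd ℂ) (α ^ ((j₀:ℕ)+1))).re + 1 := rfl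
    have e5 : Complex.normSq (X ω) = Y ω := rfl
    rw [e4, e5]
    ring
  -- integrability
  have hhmeas : ∀ j : Fin m, Measurable (h j) :=
    fun j => (hhcont j).measurable.comp (hR.meas n)
  have hindint : ∀ j : Fin m,
      Integrable (fun ω => h j ω * (ev R n j).indicator (fun _ => (1:ℝ)) ω) μ := by
    intro j
    have hmeas : AEStronglyMeasurable
        (fun ω => h j ω * (ev R n j).indicator (fun _ => (1:ℝ)) ω) μ :=
      ((hhmeas j).mul
        (measurable_const.indicator (ev_measurableSet hR.meas n j))).aestronglyMeasurable
    refine (integrable_const (((n:ℝ)+1)^2 + 2*((n:ℝ)+1) + 1)).mono' hmeas ?_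
    filter_upwards [hhbound j] with ω hω
    rw [norm_mul]
    have hind1 : ‖(ev R n j).indicator (fun _ => (1:ℝ)) ω‖ ≤ 1 := by
      rw [Real.norm_eq_abs]
      by_cases hmem : ω ∈ ev R n j
      · simp [Set.indicator_of_mem hmem]
      · simp [Set.indicator_of_notMem hmem]
    calc ‖h j ω‖ * ‖(ev R n j).indicator (fun _ => (1:ℝ)) ω‖
        ≤ (((n:ℝ)+1)^2 + 2*((n:ℝ)+1) + 1) * 1 :=
          mul_le_mul hω hind1 (norm_nonneg _) (by positivity)
      _ = ((n:ℝ)+1)^2 + 2*((n:ℝ)+1) + 1 := mul_one _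
  have hYint : Integrable Y μ :=
    (integrable_const (((n:ℝ)+1)^2)).mono' hYmeas.aestronglyMeasurable hYbound
  -- step 1 : decompose the integral
  have hs1 : ∫ ω, Complex.normSq (ucoef m k (R (n+1) ω)) ∂μ
      = ∑ j : Fin m, ∫ ω, h j ω * (ev R n j).indicator (fun _ => (1:ℝ)) ω ∂μ := by
    rw [integral_congr_ae hAE]
    exact integral_finset_sum _ fun j _ => hindint j
  -- step 2 : pull-out property
  have hs2 : ∀ j : Fin m, ∫ ω, h j ω * (ev R n j).indicator (fun _ => (1:ℝ)) ω ∂μ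
      = ∫ ω, h j ω * (R n ω j / ((n:ℝ)+1)) ∂μ := by
    intro j
    exact pullout hR n j (hhmeasF j) (hhbound j)
  -- step 3 : sum the integrals and use the algebraic identity
  have hjint : ∀ j : Fin m, Integrable (fun ω => h j ω * (R n ω j / ((n:ℝ)+1))) μ := by
    intro j
    have hmeas : AEStronglyMeasurable (fun ω => h j ω * (R n ω j / ((n:ℝ)+1))) μ :=
      ((hhmeas j).mul ((hR.meas n).eval.div_const _)).aestronglyMeasurable
    refine (integrable_const (((n:ℝ)+1)^2 + 2*((n:ℝ)+1) + 1)).mono' hmeas ?_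
    filter_upwards [hhbound j, sum_R hR n] with ω hω hωs
    rw [norm_mul]
    have hd1 : ‖R n ω j / ((n:ℝ)+1)‖ ≤ 1 := by
      have h0 : 0 ≤ R n ω j := R_nonneg hR n ω j
      have hle : R n ω j ≤ (n : ℝ) + 1 := by
        rw [← hωs]
        exact Finset.single_le_sum (fun i _ => R_nonneg hR n ω i) (Finset.mem_univ j)
      rw [Real.norm_eq_abs, abs_div, _root_.abs_of_nonneg h0,
        _root_.abs_of_pos (by positivity : (0:ℝ) < (n:ℝ)+1), div_le_one (by positivity)]
      exact hle
    calc ‖h j ω‖ * ‖R n ω j / ((n:ℝ)+1)‖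
        ≤ (((n:ℝ)+1)^2 + 2*((n:ℝ)+1) + 1) * 1 :=
          mul_le_mul hω hd1 (norm_nonneg _) (by positivity)
      _ = _ := mul_one _
  have hs3 : ∑ j : Fin m, ∫ ω, h j ω * (R n ω j / ((n:ℝ)+1)) ∂μ
      = ∫ ω, ((((n:ℝ)+2) * Y ω + ((n:ℝ)+1)) / ((n:ℝ)+1)) ∂μ := by
    rw [← integral_finset_sum _ fun j _ => hjint j]
    refine integral_congr_ae ?_
    filter_upwards [sum_R hR n] with ω hω
    have hαre : α.re = 1/2 := by rw [hα, hk]; exact alpha_re m hm hme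
    -- the complex sum
    have hW : ∑ j : Fin m, ((R n ω j : ℂ)) * (X ω * (starRingEnd ℂ) (α ^ ((j:ℕ)+1)))
        = ((Y ω : ℝ) : ℂ) * (starRingEnd ℂ) α := by
      have hW1 : ∑ j : Fin m, ((R n ω j : ℂ)) * (X ω * (starRingEnd ℂ) (α ^ ((j:ℕ)+1)))
          = X ω * (starRingEnd ℂ) (∑ j : Fin m, α ^ ((j:ℕ)+1) * (R n ω j : ℂ)) := by
        rw [map_sum, Finset.mul_sum]
        refine Finset.sum_congr rfl fun j _ => ?_
        rw [map_mul, Complex.conj_ofReal]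
        ring
      have hW2 : ∑ j : Fin m, α ^ ((j:ℕ)+1) * (R n ω j : ℂ) = α * X ω := by
        rw [hX]
        simp only [ucoef_eq, Finset.mul_sum]
        exact Finset.sum_congr rfl fun j _ => by rw [pow_succ]; ring
      rw [hW1, hW2, map_mul, ← mul_assoc, mul_comm (X ω), mul_assoc,
        Complex.mul_conj, mul_comm]
    have hT : ∑ j : Fin m, R n ω j * (X ω * (starRingEnd ℂ) (α ^ ((j:ℕ)+1))).re
        = Y ω * (1/2) := by
      have : ∀ j : Fin m, R n ω j * (X ω * (starRingEnd ℂ) (α ^ ((j:ℕ)+1))).re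
          = (((R n ω j : ℂ)) * (X ω * (starRingEnd ℂ) (α ^ ((j:ℕ)+1)))).re := by
        intro j; rw [Complex.re_ofReal_mul]
      rw [Finset.sum_congr rfl fun j _ => this j, ← Complex.re_sum, hW,
        Complex.re_ofReal_mul, Complex.conj_re, hαre]
    have hsum : ∑ j : Fin m, h j ω * R n ω j = ((n:ℝ)+2) * Y ω + ((n:ℝ)+1) := by
      have e1 : ∀ j : Fin m, h j ω * R n ω j
          = (Y ω + 1) * R n ω j
            + 2 * (R n ω j * (X ω * (starRingEnd ℂ) (α ^ ((j:ℕ)+1))).re) := by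
        intro j
        have : h j ω = Y ω + 2 * (X ω * (starRingEnd ℂ) (α ^ ((j:ℕ)+1))).re + 1 := rfl
        rw [this]; ring
      rw [Finset.sum_congr rfl fun j _ => e1 j, Finset.sum_add_distrib,
        ← Finset.mul_sum, hω, ← Finset.mul_sum, hT]
      ring
    calc ∑ j : Fin m, h j ω * (R n ω j / ((n:ℝ)+1))
        = (∑ j : Fin m, h j ω * R n ω j) / ((n:ℝ)+1) := by
          rw [Finset.sum_div]
          exact Finset.sum_congr rfl fun j _ => by ring
      _ = (((n:ℝ)+2) * Y ω + ((n:ℝ)+1)) / ((n:ℝ)+1) := by rw [hsum]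
  -- step 4 : compute the integral
  have hs4 : ∫ ω, ((((n:ℝ)+2) * Y ω + ((n:ℝ)+1)) / ((n:ℝ)+1)) ∂μ
      = ((n:ℝ)+2)/((n:ℝ)+1) * (∫ ω, Y ω ∂μ) + 1 := by
    have hpt : ∀ ω, (((n:ℝ)+2) * Y ω + ((n:ℝ)+1)) / ((n:ℝ)+1)
        = (((n:ℝ)+2)/((n:ℝ)+1)) * Y ω + 1 := by
      intro ω
      have hne : ((n:ℝ)+1) ≠ 0 := by positivity
      field_simp
    simp_rw [hpt]
    rw [integral_add (hYint.const_mul _) (integrable_const 1), integral_const_mul,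
      integral_const]
    simp
  rw [hs1, Finset.sum_congr rfl fun j _ => hs2 j, hs3, hs4]

lemma base_integral {Ω : Type*} [MeasurableSpace Ω] {μ : Measure Ω} {m : ℕ}
    {R : ℕ → Ω → Fin m → ℝ} {j0 : Fin m} (hR : IsCyclicUrn μ m j0 R) (k : ℕ) :
    ∫ ω, Complex.normSq (ucoef m k (R 0 ω)) ∂μ = 1 := by
  haveI := hR.isProb
  have hpt : ∀ ω, Complex.normSq (ucoef m k (R 0 ω)) = 1 := by
    intro ω
    rw [hR.init ω]
    have h1 : ucoef m k (fun i => if i = j0 then 1 else 0) = cw m ^ (k * (j0:ℕ)) := by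
      unfold ucoef
      have h2 : ∀ t : Fin m, (((if t = j0 then (1:ℝ) else 0) : ℝ) : ℂ)
          = if t = j0 then 1 else 0 := fun t => by split_ifs <;> simp
      simp only [h2, mul_ite, mul_one, mul_zero]
      rw [Finset.sum_ite_eq' Finset.univ j0]
      simp
    rw [h1, normSq_cw_pow]
  simp only [hpt]
  simp

theorem stmt10 {Ω : Type*} [MeasurableSpace Ω] (μ : Measure Ω) (m : ℕ) (hm : 2 ≤ m)
    (hme : 6 ∣ m) (R : ℕ → Ω → Fin m → ℝ) (hR : IsCyclicUrn μ m ⟨0, by omega⟩ R)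
    (n : ℕ) :
    ∫ ω, ‖ucoef m (m / 6) (R n ω)‖ ^ 2 ∂μ =
      ((n : ℝ) + 1) * ∑ t ∈ Finset.Icc 1 (n + 1), (1 : ℝ) / t := by
  have key : ∀ N : ℕ, ∫ ω, Complex.normSq (ucoef m (m/6) (R N ω)) ∂μ
      = ((N:ℝ)+1) * ∑ t ∈ Finset.Icc 1 (N+1), (1:ℝ)/t := by
    intro N
    induction N with
    | zero => rw [base_integral hR]; norm_num
    | succ N IH =>
      rw [step_integral hR hm hme N, IH]
      have hH : ∑ t ∈ Finset.Icc 1 (N+1+1), (1:ℝ)/t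
          = (∑ t ∈ Finset.Icc 1 (N+1), (1:ℝ)/t) + 1/((N:ℝ)+2) := by
        rw [Finset.sum_Icc_succ_top (by omega : 1 ≤ N+1+1)]
        push_cast
        ring
      push_cast
      rw [hH]
      have hne : ((N:ℝ)+1) ≠ 0 := by positivity
      field_simp
      ring
  rw [← key n]
  refine integral_congr_ae (Filter.Eventually.of_forall fun ω => ?_)
  simp only []
  rw [Complex.sq_norm]

end
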